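/- arXiv:2208.09476 — 3 statements merged into one kernel-verified Lean document; each statement's English description precedes it below -/
import Mathlib

section
/- Let G be a finite group and let f : G → ℚ be a function such that f(g) = f(h) whenever the cyclic subgroups generated by g and by h are conjugate in G. For a subgroup C of G let π_C : G → ℚ be the permutation character of G acting on the left coset space G/C, i.e., π_C(g) is the number of cosets xC with g·xC = xC. Then f is a ℚ-linear combination of the functions π_C with C ranging over the cyclic subgroups of G. -/
open Subgroup

section ArtinAux

variable {G : Type*} [Group G]

/-- Conjugacy of generated cyclic subgroups. -/
def ArtinCrel (g h : G) : Prop :=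
  ∃ x : G, Subgroup.zpowers (x * g * x⁻¹) = Subgroup.zpowers h

private lemma artin_conj_zpowers (x a : G) :
    zpowers (x * a * x⁻¹) = (zpowers a).map (MulAut.conj x).toMonoidHom := by
  ext b
  simp only [mem_zpowers_iff, Subgroup.mem_map, MulEquiv.coe_toMonoidHom]
  constructor
  · rintro ⟨k, rfl⟩
    exact ⟨a ^ k, ⟨k, rfl⟩, by simp [MulAut.conj_apply, mul_zpow, zpow_mul]⟩
  · rintro ⟨c, ⟨k, rfl⟩, rfl⟩
    exact ⟨k, by simp [MulAut.conj_apply]⟩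

private lemma artin_crel_refl (g : G) : ArtinCrel g g := ⟨1, by group⟩

private lemma artin_crel_symm {g h : G} (hgh : ArtinCrel g h) : ArtinCrel h g := by
  obtain ⟨x, hx⟩ := hgh
  refine ⟨x⁻¹, ?_⟩
  have h2 : zpowers (x⁻¹ * h * x⁻¹⁻¹) = (zpowers h).map (MulAut.conj x⁻¹).toMonoidHom :=
    artin_conj_zpowers x⁻¹ h
  rw [h2, ← hx, artin_conj_zpowers, Subgroup.map_map]
  convert Subgroup.map_id (zpowers g)
  ext b
  simp [MulAut.conj_apply]
  group

private lemma artin_crel_trans {g h k : G} (h1 : ArtinCrel g h) (h2 : ArtinCrel h k) :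
    ArtinCrel g k := by
  obtain ⟨x, hx⟩ := h1
  obtain ⟨y, hy⟩ := h2
  refine ⟨y * x, ?_⟩
  have : (y * x) * g * (y * x)⁻¹ = y * (x * g * x⁻¹) * y⁻¹ := by group
  rw [this, artin_conj_zpowers y, hx, ← artin_conj_zpowers y, hy]

end ArtinAux

open Classical in
/-- Indicator of the crel-class of `g1`. -/
noncomputable def ArtinE {G : Type*} [Group G] (g1 : G) : G → ℚ :=
  fun g => if ArtinCrel g g1 then 1 else 0

open Classical in
noncomputable def ArtinN (G : Type*) [Group G] [Fintype G] (g1 : G) : ℕ :=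
  (Finset.univ.filter (fun h : G => ArtinCrel h g1)).card

section ArtinAux2

variable {G : Type*} [Group G] [Fintype G]

open Classical

private lemma artinN_pos (g1 : G) : 0 < ArtinN G g1 := by
  rw [ArtinN, Finset.card_pos]
  exact ⟨g1, by simp [artin_crel_refl]⟩

private lemma artinE_eq {g1 g2 : G} (h : ArtinCrel g1 g2) : ArtinE g1 = ArtinE g2 := by
  funext g
  simp only [ArtinE]
  congr 1
  apply propext
  exact ⟨fun hg => artin_crel_trans hg h, fun hg => artin_crel_trans hg (artin_crel_symm h)⟩

private lemma artinN_eq {g1 g2 : G} (h : ArtinCrel g1 g2) : ArtinN G g1 = ArtinN G g2 := by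
  unfold ArtinN
  congr 1
  ext g
  simp only [Finset.mem_filter, Finset.mem_univ, true_and]
  exact ⟨fun hg => artin_crel_trans hg h, fun hg => artin_crel_trans hg (artin_crel_symm h)⟩

private lemma artin_decomp (u : G → ℚ) (hu : ∀ g h : G, ArtinCrel g h → u g = u h) :
    u = ∑ g1 : G, (u g1 / (ArtinN G g1 : ℚ)) • ArtinE g1 := by
  funext g
  rw [Finset.sum_apply]
  simp only [Pi.smul_apply, smul_eq_mul, ArtinE]
  rw [Finset.sum_congr rfl (fun g1 _ => mul_ite (ArtinCrel g g1) (u g1 / (ArtinN G g1 : ℚ)) 1 0)]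
  simp only [mul_one, mul_zero]
  rw [← Finset.sum_filter]
  have hterm : ∀ g1 ∈ Finset.univ.filter (fun g1 : G => ArtinCrel g g1),
      u g1 / (ArtinN G g1 : ℚ) = u g / (ArtinN G g : ℚ) := by
    intro g1 hg1
    rw [Finset.mem_filter] at hg1
    rw [← hu g g1 hg1.2, artinN_eq (artin_crel_symm hg1.2)]
  rw [Finset.sum_congr rfl hterm, Finset.sum_const, nsmul_eq_mul]
  have hcard : (Finset.univ.filter (fun g1 : G => ArtinCrel g g1)).card = ArtinN G g := by
    unfold ArtinN
    congr 1
    ext g1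
    simp only [Finset.mem_filter, Finset.mem_univ, true_and]
    exact ⟨fun h => artin_crel_symm h, fun h => artin_crel_symm h⟩
  rw [hcard]
  have hN : (ArtinN G g : ℚ) ≠ 0 := Nat.cast_ne_zero.mpr (artinN_pos g).ne'
  field_simp

end ArtinAux2

section ArtinPi

variable {G : Type*} [Group G]

noncomputable def ArtinPi (C : Subgroup G) : G → ℚ :=
  fun g => (Nat.card {x : G ⧸ C // g • x = x} : ℚ)

private lemma artin_fixed_iff (C : Subgroup G) (g x : G) :
    g • (x : G ⧸ C) = (x : G ⧸ C) ↔ x⁻¹ * g * x ∈ C := by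
  rw [MulAction.Quotient.smul_coe, QuotientGroup.eq]
  constructor
  · intro h
    have := C.inv_mem h
    simpa [mul_assoc] using this
  · intro h
    have := C.inv_mem h
    simpa [mul_assoc] using this

private lemma artin_pi_conj (C : Subgroup G) (x g : G) :
    ArtinPi C (x * g * x⁻¹) = ArtinPi C g := by
  unfold ArtinPi
  congr 1
  apply Nat.card_congr
  refine ⟨fun p => ⟨x⁻¹ • p.1, ?_⟩, fun p => ⟨x • p.1, ?_⟩, ?_, ?_⟩
  · obtain ⟨y, hy⟩ := p
    simp only [← mul_smul]
    have : g * x⁻¹ = x⁻¹ * (x * g * x⁻¹) := by group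
    rw [this, mul_smul, hy]
  · obtain ⟨y, hy⟩ := p
    simp only [← mul_smul]
    have : (x * g * x⁻¹) * x = x * g := by group
    rw [this, mul_smul, hy]
  · intro p; ext : 1; simp [← mul_smul]
  · intro p; ext : 1; simp [← mul_smul]

private lemma artin_pi_zpowers_eq (C : Subgroup G) {g h : G}
    (hz : Subgroup.zpowers g = Subgroup.zpowers h) : ArtinPi C g = ArtinPi C h := by
  unfold ArtinPi
  congr 1
  apply Nat.card_congr
  apply Equiv.subtypeEquivRight
  intro y
  have : ∀ a : G, (a • y = y) ↔ a ∈ MulAction.stabilizer G y := fun a => Iff.rfl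
  rw [this, this, ← Subgroup.zpowers_le, ← Subgroup.zpowers_le, hz]

private lemma artin_pi_crel (C : Subgroup G) {g h : G} (hgh : ArtinCrel g h) :
    ArtinPi C g = ArtinPi C h := by
  obtain ⟨x, hx⟩ := hgh
  rw [← artin_pi_conj C x g, artin_pi_zpowers_eq C hx]

private lemma artin_pi_ne_zero [Finite G] (g0 : G) :
    ArtinPi (Subgroup.zpowers g0) g0 ≠ 0 := by
  unfold ArtinPi
  have : Finite (G ⧸ Subgroup.zpowers g0) := Quotient.finite _
  rw [Nat.cast_ne_zero]
  have h1 : g0 • (((1 : G) : G ⧸ Subgroup.zpowers g0)) = ((1 : G) : G ⧸ Subgroup.zpowers g0) := by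
    rw [artin_fixed_iff]
    simpa using Subgroup.mem_zpowers g0
  have : 0 < Nat.card {x : G ⧸ Subgroup.zpowers g0 // g0 • x = x} :=
    Nat.card_pos_iff.mpr ⟨⟨_, h1⟩, inferInstance⟩
  omega

private lemma artin_pi_support (C : Subgroup G) (g : G) (h : ArtinPi C g ≠ 0) :
    ∃ x : G, x * g * x⁻¹ ∈ C := by
  unfold ArtinPi at h
  rw [Nat.cast_ne_zero] at h
  have hne : Nonempty {x : G ⧸ C // g • x = x} := Nat.card_ne_zero.mp h |>.1
  obtain ⟨y, hy⟩ := hne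
  induction y using QuotientGroup.induction_on with
  | H x =>
    rw [artin_fixed_iff] at hy
    exact ⟨x⁻¹, by simpa using hy⟩

end ArtinPi

private lemma artin_zpowers_isCyclic {G : Type*} [Group G] (g : G) :
    IsCyclic (Subgroup.zpowers g) := by
  refine ⟨⟨⟨g, Subgroup.mem_zpowers g⟩, ?_⟩⟩
  rintro ⟨x, hx⟩
  obtain ⟨k, hk⟩ := Subgroup.mem_zpowers_iff.mp hx
  exact ⟨k, by ext; simp [← hk]⟩

private lemma artin_card_lt {G : Type*} [Group G] [Finite G] {H K : Subgroup G} (h : H < K) :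
    Nat.card H < Nat.card K := by
  rw [← SetLike.coe_ssubset_coe] at h
  have h1 : Nat.card H = (H : Set G).ncard := Nat.card_coe_set_eq _
  have h2 : Nat.card K = (K : Set G).ncard := Nat.card_coe_set_eq _
  rw [h1, h2]
  exact Set.ncard_lt_ncard h (Set.toFinite _)

open Classical in
private lemma artin_key {G : Type*} [Group G] [Finite G] [Fintype G] (g0 : G) :
    ArtinE g0 ∈ Submodule.span ℚ
      {π : G → ℚ | ∃ C : Subgroup G, IsCyclic C ∧
        π = fun g => (Nat.card {x : G ⧸ C // g • x = x} : ℚ)} := by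
  set S : Set (G → ℚ) := {π : G → ℚ | ∃ C : Subgroup G, IsCyclic C ∧
        π = fun g => (Nat.card {x : G ⧸ C // g • x = x} : ℚ)} with hS
  suffices h : ∀ n : ℕ, ∀ g0 : G, orderOf g0 = n → ArtinE g0 ∈ Submodule.span ℚ S from
    h _ g0 rfl
  intro n
  induction n using Nat.strong_induction_on with
  | _ n ih =>
    intro g0 hn
    have hπS : ArtinPi (Subgroup.zpowers g0) ∈ S :=
      ⟨Subgroup.zpowers g0, artin_zpowers_isCyclic g0, rfl⟩
    have hdec := artin_decomp (ArtinPi (Subgroup.zpowers g0))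
      (fun g h hgh => artin_pi_crel _ hgh)
    rw [← Finset.sum_filter_add_sum_filter_not Finset.univ
      (fun g1 : G => ArtinCrel g1 g0)] at hdec
    have hπ0 : ArtinPi (Subgroup.zpowers g0) g0 ≠ 0 := artin_pi_ne_zero g0
    have hN : ((ArtinN G g0 : ℚ)) ≠ 0 := Nat.cast_ne_zero.mpr (artinN_pos g0).ne'
    have hfirst : ∑ g1 ∈ Finset.univ.filter (fun g1 : G => ArtinCrel g1 g0),
        (ArtinPi (Subgroup.zpowers g0) g1 / (ArtinN G g1 : ℚ)) • ArtinE g1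
        = ArtinPi (Subgroup.zpowers g0) g0 • ArtinE g0 := by
      have hterm : ∀ g1 ∈ Finset.univ.filter (fun g1 : G => ArtinCrel g1 g0),
          (ArtinPi (Subgroup.zpowers g0) g1 / (ArtinN G g1 : ℚ)) • ArtinE g1
          = (ArtinPi (Subgroup.zpowers g0) g0 / (ArtinN G g0 : ℚ)) • ArtinE g0 := by
        intro g1 hg1
        rw [Finset.mem_filter] at hg1
        rw [artin_pi_crel _ hg1.2, artinN_eq hg1.2, artinE_eq hg1.2]
      rw [Finset.sum_congr rfl hterm, Finset.sum_const]
      have hcard : (Finset.univ.filter (fun g1 : G => ArtinCrel g1 g0)).card = ArtinN G g0 := by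
        unfold ArtinN; congr 1
      rw [hcard, ← Nat.cast_smul_eq_nsmul ℚ, smul_smul]
      congr 1
      field_simp
    rw [hfirst] at hdec
    set R : G → ℚ := ∑ g1 ∈ Finset.univ.filter (fun g1 : G => ¬ ArtinCrel g1 g0),
        (ArtinPi (Subgroup.zpowers g0) g1 / (ArtinN G g1 : ℚ)) • ArtinE g1 with hR
    have hRmem : R ∈ Submodule.span ℚ S := by
      apply Submodule.sum_mem
      intro g1 hg1
      rw [Finset.mem_filter] at hg1
      by_cases hz : ArtinPi (Subgroup.zpowers g0) g1 = 0
      · rw [hz]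
        simp only [zero_div, zero_smul]
        exact Submodule.zero_mem _
      · obtain ⟨x, hx⟩ := artin_pi_support _ _ hz
        have hle : Subgroup.zpowers (x * g1 * x⁻¹) ≤ Subgroup.zpowers g0 :=
          Subgroup.zpowers_le.mpr hx
        have hne : Subgroup.zpowers (x * g1 * x⁻¹) ≠ Subgroup.zpowers g0 := by
          intro heq
          exact hg1.2 ⟨x, heq⟩
        have hlt : orderOf g1 < n := by
          have h1 : orderOf (x * g1 * x⁻¹) = orderOf g1 := by
            have := orderOf_injective (MulAut.conj x).toMonoidHom
              (MulAut.conj x).injective g1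
            simpa [MulAut.conj_apply] using this
          have h2 := artin_card_lt (lt_of_le_of_ne hle hne)
          rw [Nat.card_zpowers, Nat.card_zpowers, h1, hn] at h2
          exact h2
        exact Submodule.smul_mem _ _ (ih (orderOf g1) hlt g1 rfl)
    have hE : ArtinPi (Subgroup.zpowers g0) - R
        = ArtinPi (Subgroup.zpowers g0) g0 • ArtinE g0 := by
      nth_rewrite 1 [hdec]
      rw [add_sub_cancel_right]
    have hE2 : ArtinE g0 = (ArtinPi (Subgroup.zpowers g0) g0)⁻¹ •
        (ArtinPi (Subgroup.zpowers g0) - R) := by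
      rw [hE, smul_smul, inv_mul_cancel₀ hπ0, one_smul]
    rw [hE2]
    exact Submodule.smul_mem _ _
      (Submodule.sub_mem _ (Submodule.subset_span hπS) hRmem)

/-- Artin's induction formula, in the form used for L-series of Galois stratifications:
a `ℚ`-valued function on a finite group `G` that is constant on the classes determined by
conjugacy of the generated cyclic subgroups is a `ℚ`-linear combination of the permutation
characters `π_C : g ↦ #{x ∈ G/C | g·xC = xC}` of the coset spaces `G ⧸ C`, with `C` ranging
over cyclic subgroups of `G`. -/
theorem artin_induction_permutation_characters (G : Type*) [Group G] [Finite G]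
    (f : G → ℚ)
    (hf : ∀ g h : G,
      (∃ x : G, Subgroup.zpowers (x * g * x⁻¹) = Subgroup.zpowers h) → f g = f h) :
    f ∈ Submodule.span ℚ
      {π : G → ℚ | ∃ C : Subgroup G, IsCyclic C ∧
        π = fun g => (Nat.card {x : G ⧸ C // g • x = x} : ℚ)} := by
  cases nonempty_fintype G
  rw [artin_decomp f (fun g h hgh => hf g h hgh)]
  exact Submodule.sum_mem _ (fun g1 _ => Submodule.smul_mem _ _ (artin_key g1))
end

section
/- Let Z ∈ ℚ[[t]] be the unique formal power series with constant coefficient 1 satisfying the differential equation 2·(1 − t)·(dZ/dt) = Z (so Z = (1 − t)^{−1/2}). Then the associated Poincaré series P = t·(dZ/dt)·Z⁻¹ equals t/(2·(1 − t)) and in particular is rational, but Z itself is not rational. -/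
open PowerSeries

/-- The zeta function `Z = (1 − t)^{−1/2}`, characterized as the power series with
`Z(0) = 1` satisfying `2·(1 − t)·Z′ = Z`, has a rational Poincaré series
`P = t·Z′/Z = t/(2·(1 − t))`, while `Z` itself is not rational: rationality of the
Poincaré series does not imply rationality of the zeta function. -/
theorem poincare_rational_zeta_not_rational (Z : PowerSeries ℚ)
    (hZ0 : PowerSeries.constantCoeff Z = 1)
    (hODE : 2 * (1 - PowerSeries.X) * (d⁄dX ℚ Z) = Z) :
    PowerSeries.X * (d⁄dX ℚ Z) * Z⁻¹ =
      PowerSeries.X * (2 * (1 - PowerSeries.X))⁻¹ ∧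
    (∃ a b : Polynomial ℚ, b ≠ 0 ∧
      (b : PowerSeries ℚ) * (PowerSeries.X * (d⁄dX ℚ Z) * Z⁻¹) = (a : PowerSeries ℚ)) ∧
    ¬ (∃ a b : Polynomial ℚ, b ≠ 0 ∧
      (b : PowerSeries ℚ) * Z = (a : PowerSeries ℚ)) := by
  have hZc : PowerSeries.constantCoeff Z ≠ 0 := by rw [hZ0]; norm_num
  have huc : PowerSeries.constantCoeff (2 * (1 - PowerSeries.X) : PowerSeries ℚ) ≠ 0 := by
    simp only [map_mul, map_sub, map_one, PowerSeries.constantCoeff_X, map_ofNat]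
    norm_num
  have hZinv : Z * Z⁻¹ = 1 := PowerSeries.mul_inv_cancel _ hZc
  -- key: Z' * Z⁻¹ = (2(1-X))⁻¹
  have hkey : (d⁄dX ℚ Z) * Z⁻¹ = (2 * (1 - PowerSeries.X))⁻¹ := by
    rw [PowerSeries.eq_inv_iff_mul_eq_one huc]
    calc d⁄dX ℚ Z * Z⁻¹ * (2 * (1 - PowerSeries.X))
        = (2 * (1 - PowerSeries.X) * (d⁄dX ℚ Z)) * Z⁻¹ := by ring
      _ = 1 := by rw [hODE, hZinv]
  -- key: Z^2 * (1 - X) = 1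
  have hsq : Z ^ 2 * (1 - PowerSeries.X) = 1 := by
    apply PowerSeries.derivative.ext
    · have : d⁄dX ℚ (Z ^ 2 * (1 - PowerSeries.X))
          = Z ^ 2 * d⁄dX ℚ (1 - PowerSeries.X) + (1 - PowerSeries.X) * d⁄dX ℚ (Z ^ 2) := by
        rw [Derivation.leibniz]; simp [smul_eq_mul, mul_comm]
      rw [this]
      have h1 : d⁄dX ℚ (1 - PowerSeries.X : PowerSeries ℚ) = -1 := by simp
      have h2 : d⁄dX ℚ (Z ^ 2) = 2 * Z * d⁄dX ℚ Z := by
        rw [pow_two, Derivation.leibniz, smul_eq_mul]; ring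
      rw [h1, h2, Derivation.map_one_eq_zero]
      calc Z ^ 2 * (-1) + (1 - PowerSeries.X) * (2 * Z * d⁄dX ℚ Z)
          = Z * (2 * (1 - PowerSeries.X) * d⁄dX ℚ Z) - Z ^ 2 := by ring
        _ = 0 := by rw [hODE]; ring
    · simp [hZ0]
  refine ⟨?_, ?_, ?_⟩
  · rw [mul_assoc, hkey]
  · refine ⟨Polynomial.X, 2 * (1 - Polynomial.X), ?_, ?_⟩
    · intro h
      have := congrArg (Polynomial.eval 0) h
      simp at this
    · have hcoe : ((2 * (1 - Polynomial.X) : Polynomial ℚ) : PowerSeries ℚ)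
          = 2 * (1 - PowerSeries.X) := by
        rw [Polynomial.coe_mul, Polynomial.coe_sub, Polynomial.coe_one, Polynomial.coe_X,
          show (2 : Polynomial ℚ) = ((1 : Polynomial ℚ) + 1) by norm_num,
          Polynomial.coe_add, Polynomial.coe_one]
        norm_num
      rw [mul_assoc, hkey, hcoe, Polynomial.coe_X, ← mul_assoc,
        mul_comm (2 * (1 - PowerSeries.X)) PowerSeries.X, mul_assoc,
        PowerSeries.mul_inv_cancel _ huc, mul_one]
  · rintro ⟨a, b, hb, hab⟩
    have hZne : Z ≠ 0 := by
      intro h; rw [h, map_zero] at hZ0; norm_num at hZ0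
    have ha : a ≠ 0 := by
      intro h
      rw [h] at hab
      push_cast at hab
      rcases mul_eq_zero.mp hab with h' | h'
      · exact hb ((Polynomial.coe_eq_zero_iff).mp h')
      · exact hZne h'
    -- b^2 = a^2 * (1-X) as power series
    have hps : ((b ^ 2 : Polynomial ℚ) : PowerSeries ℚ)
        = ((a ^ 2 * (1 - Polynomial.X) : Polynomial ℚ) : PowerSeries ℚ) := by
      push_cast
      calc ((b : PowerSeries ℚ)) ^ 2
          = ((b : PowerSeries ℚ)) ^ 2 * (Z ^ 2 * (1 - PowerSeries.X)) := by rw [hsq]; ring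
        _ = ((b : PowerSeries ℚ) * Z) ^ 2 * (1 - PowerSeries.X) := by ring
        _ = ((a : PowerSeries ℚ)) ^ 2 * (1 - PowerSeries.X) := by rw [hab]
    have hpoly : (b ^ 2 : Polynomial ℚ) = a ^ 2 * (1 - Polynomial.X) :=
      Polynomial.coe_injective ℚ hps
    have hdeg := congrArg Polynomial.natDegree hpoly
    have h1X : (1 - Polynomial.X : Polynomial ℚ).natDegree = 1 := by
      compute_degree!
    rw [Polynomial.natDegree_pow, Polynomial.natDegree_mul (pow_ne_zero 2 ha) (by
      intro h; rw [h] at h1X; simp at h1X), Polynomial.natDegree_pow, h1X] at hdeg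
    omega
end

section
/- Let f ∈ ℤ[X] be a monic irreducible polynomial of degree ≥ 1. Then there are infinitely many primes p such that the image of f in (ZMod p)[X] is squarefree and splits into linear factors (i.e., f splits completely into distinct linear factors modulo p). -/
open Polynomial IntermediateField

/-- Schur: a nonconstant integer polynomial has a root modulo arbitrarily large primes. -/
lemma schur_exists (g : Polynomial ℤ) (hd : 1 ≤ g.natDegree) (N : ℕ) :
    ∃ p : ℕ, N ≤ p ∧ p.Prime ∧ ∃ n : ℤ, (p : ℤ) ∣ g.eval n := by
  set c : ℤ := g.eval 0 with hc
  by_cases hc0 : c = 0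
  · obtain ⟨p, hNp, hp⟩ := Nat.exists_infinite_primes N
    exact ⟨p, hNp, hp, 0, by rw [← hc, hc0]; exact dvd_zero _⟩
  have hXdvd : X ∣ (g - C c) := by
    rw [X_dvd_iff]; simp [hc, coeff_zero_eq_eval_zero]
  obtain ⟨h, hh⟩ := hXdvd
  have key : ∀ k : ℤ, g.eval k = c + k * h.eval k := by
    intro k
    have := congrArg (eval k) hh
    simp only [eval_sub, eval_C, eval_mul, eval_X] at this
    linarith [this]
  set M : ℤ := (N.factorial : ℤ) with hM
  have hM0 : M ≠ 0 := by
    simp [hM, Nat.factorial_ne_zero]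
  have hcM0 : c * M ≠ 0 := mul_ne_zero hc0 hM0
  set E : ℤ → ℤ := fun t => 1 + (M * t) * h.eval (c * (M * t)) with hE
  have hgE : ∀ t : ℤ, g.eval (c * (M * t)) = c * E t := by
    intro t; rw [key, hE]; ring
  have : ∃ t : ℤ, 2 ≤ |E t| := by
    by_contra hcon
    push_neg at hcon
    set P : Polynomial ℤ := g.comp (C (c * M) * X) with hP
    have hPeval : ∀ t : ℤ, P.eval t = g.eval (c * (M * t)) := by
      intro t; rw [hP, eval_comp]; simp [mul_assoc]
    have hPdeg : P.natDegree = g.natDegree := by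
      rw [hP, natDegree_comp, natDegree_C_mul_X _ hcM0, mul_one]
    have hcover : (Set.univ : Set ℤ) ⊆
        {t | P.eval t = c * (-1)} ∪ {t | P.eval t = c * 0} ∪ {t | P.eval t = c * 1} := by
      intro t _
      obtain ⟨hb1, hb2⟩ := abs_lt.mp (hcon t)
      have h3 : E t = -1 ∨ E t = 0 ∨ E t = 1 := by omega
      rcases h3 with hEt | hEt | hEt
      · left; left; rw [Set.mem_setOf_eq, hPeval, hgE, hEt]
      · left; right; rw [Set.mem_setOf_eq, hPeval, hgE, hEt]
      · right; rw [Set.mem_setOf_eq, hPeval, hgE, hEt]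
    have hinf : ∃ v : ℤ, ({t : ℤ | P.eval t = c * v}).Infinite := by
      have huniv : (Set.univ : Set ℤ).Infinite := Set.infinite_univ
      have := huniv.mono hcover
      rcases Set.infinite_union.mp this with h' | h'
      · rcases Set.infinite_union.mp h' with h'' | h''
        · exact ⟨-1, h''⟩
        · exact ⟨0, h''⟩
      · exact ⟨1, h'⟩
    obtain ⟨v, hv⟩ := hinf
    have hroots : {t : ℤ | (P - C (c * v)).IsRoot t}.Infinite := by
      apply hv.mono
      intro t ht
      simp only [Set.mem_setOf_eq, IsRoot.def, eval_sub, eval_C] at *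
      omega
    have hP0 : P - C (c * v) = 0 := eq_zero_of_infinite_isRoot _ hroots
    have : P = C (c * v) := by linear_combination (norm := ring_nf) hP0
    have : P.natDegree = 0 := by rw [this]; exact natDegree_C _
    omega
  obtain ⟨t, ht⟩ := this
  have hEne1 : (E t).natAbs ≠ 1 := by
    rw [Int.abs_eq_natAbs] at ht
    omega
  obtain ⟨q, hq, hqdvd⟩ := Int.exists_prime_and_dvd hEne1
  refine ⟨q.natAbs, ?_, Int.prime_iff_natAbs_prime.mp hq, c * (M * t), ?_⟩
  · by_contra hlt
    push_neg at hlt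
    have hple : q.natAbs ≤ N := le_of_lt hlt
    have hppos : 0 < q.natAbs := Int.natAbs_pos.mpr hq.ne_zero
    have hdvdM : (q.natAbs : ℤ) ∣ M := by
      rw [hM]
      exact_mod_cast Int.natCast_dvd_natCast.mpr (Nat.dvd_factorial hppos hple)
    have hdvdk : (q.natAbs : ℤ) ∣ (M * t) * h.eval (c * (M * t)) :=
      dvd_mul_of_dvd_left (hdvdM.mul_right t) _
    have hdvdE : (q.natAbs : ℤ) ∣ E t := (Int.natAbs_dvd).mpr hqdvd
    have : (q.natAbs : ℤ) ∣ 1 := by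
      have := dvd_sub hdvdE hdvdk
      simpa [hE] using this
    have hle1 := Int.le_of_dvd one_pos this
    have h2le := (Int.prime_iff_natAbs_prime.mp hq).two_le
    omega
  · rw [hgE]
    exact Dvd.dvd.mul_left ((Int.natAbs_dvd).mpr hqdvd) c

lemma exists_int_scale (a : Polynomial ℚ) :
    ∃ (n : ℤ) (A : Polynomial ℤ), n ≠ 0 ∧ A.map (Int.castRingHom ℚ) = C (n : ℚ) * a := by
  obtain ⟨b, hb⟩ := IsLocalization.integerNormalization_map_to_map (nonZeroDivisors ℤ) a
  refine ⟨(b : ℤ), IsLocalization.integerNormalization (nonZeroDivisors ℤ) a,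
    nonZeroDivisors.coe_ne_zero b, ?_⟩
  rw [← algebraMap_int_eq, hb]
  ext i
  simp [coeff_smul, zsmul_eq_mul]

lemma exists_coprime_combination (f : Polynomial ℤ) (hmonic : f.Monic)
    (hirr : Irreducible f) :
    ∃ (c : ℤ) (A B : Polynomial ℤ), c ≠ 0 ∧ A * f + B * f.derivative = C c := by
  have hqirr : Irreducible (f.map (algebraMap ℤ ℚ)) :=
    (Monic.irreducible_iff_irreducible_map_fraction_map hmonic).mp hirr
  have hsep : (f.map (algebraMap ℤ ℚ)).Separable := hqirr.separable
  obtain ⟨a, b, hab⟩ := hsep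
  obtain ⟨n₁, A₁, hn₁, hA₁⟩ := exists_int_scale a
  obtain ⟨n₂, B₁, hn₂, hB₁⟩ := exists_int_scale b
  refine ⟨n₁ * n₂, C n₂ * A₁, C n₁ * B₁, mul_ne_zero hn₁ hn₂, ?_⟩
  apply Polynomial.map_injective (Int.castRingHom ℚ) (by exact_mod_cast Int.cast_injective)
  rw [Polynomial.map_add, Polynomial.map_mul, Polynomial.map_mul, Polynomial.map_mul,
    Polynomial.map_mul, hA₁, hB₁, map_C, map_C, map_C]
  have hd : (f.derivative.map (Int.castRingHom ℚ)) = derivative (f.map (Int.castRingHom ℚ)) :=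
    (derivative_map f (Int.castRingHom ℚ)).symm
  rw [hd]
  have : (Int.castRingHom ℚ) = algebraMap ℤ ℚ := by rw [algebraMap_int_eq]
  rw [this]
  simp only [eq_intCast, Int.cast_mul, ← C_eq_intCast, map_mul]
  linear_combination (norm := ring_nf) (C (n₁ : ℚ) * C (n₂ : ℚ)) * hab

lemma scaleRoots_X_sub_C' {R : Type*} [CommRing R] [Nontrivial R] (s α : R) :
    (X - C α).scaleRoots s = X - C (s * α) := by
  ext i
  rw [coeff_scaleRoots, natDegree_X_sub_C]
  match i with
  | 0 => simp [mul_comm]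
  | 1 => simp
  | (n+2) => simp [coeff_X, Polynomial.coeff_C]

lemma multiset_prod_scaleRoots {K : Type*} [Field K] (m : Multiset K) (s : K) :
    ((m.map (fun α => X - C α)).prod).scaleRoots s
      = (m.map (fun α => X - C (s * α))).prod := by
  induction m using Multiset.induction with
  | empty => simp
  | cons a m ih =>
      simp only [Multiset.map_cons, Multiset.prod_cons]
      rw [mul_scaleRoots_of_noZeroDivisors, scaleRoots_X_sub_C', ih]

/-- The elementary case of the Chebotarev density theorem used in the paper: a monic
irreducible polynomial over `ℤ` of degree at least `1` splits completely into distinct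
linear factors modulo infinitely many primes `p`. -/
theorem infinitely_many_split_primes (f : Polynomial ℤ) (hmonic : f.Monic)
    (hirr : Irreducible f) (hdeg : 1 ≤ f.natDegree) :
    {p : ℕ | ∃ hp : p.Prime,
      haveI : Fact p.Prime := ⟨hp⟩
      Squarefree (f.map (Int.castRingHom (ZMod p))) ∧
        Polynomial.Splits
          (f.map (Int.castRingHom (ZMod p)))}.Infinite := by
  classical
  obtain ⟨c, A, B, hc0, hAB⟩ := exists_coprime_combination f hmonic hirr
  set qf : Polynomial ℚ := f.map (algebraMap ℤ ℚ) with hqf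
  set K := qf.SplittingField with hK
  obtain ⟨θ₀, hθ₀⟩ := Field.exists_primitive_element ℚ K
  have halgQ : IsAlgebraic ℚ θ₀ := (Algebra.IsIntegral.isIntegral θ₀).isAlgebraic
  have halgZ : IsAlgebraic ℤ θ₀ := (IsFractionRing.isAlgebraic_iff ℤ ℚ K).mpr halgQ
  obtain ⟨d, hd0, hdint⟩ := halgZ.exists_integral_multiple
  set θ : K := algebraMap ℤ K d * θ₀ with hθ
  have hθint : IsIntegral ℤ θ := by rw [hθ, ← Algebra.smul_def]; exact hdint
  have hθQ : IsIntegral ℚ θ := hθint.tower_top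
  have hprim : ℚ⟮θ⟯ = ⊤ := by
    rw [eq_top_iff, ← hθ₀, IntermediateField.adjoin_simple_le_iff]
    have hθmem : θ ∈ ℚ⟮θ⟯ := IntermediateField.mem_adjoin_simple_self ℚ θ
    have hsmul : ((d : ℚ))⁻¹ • θ = θ₀ := by
      rw [hθ, Algebra.smul_def]
      have h1 : algebraMap ℤ K d = algebraMap ℚ K ((d : ℚ)) := by
        simp [algebraMap_int_eq]
      rw [h1, ← mul_assoc, ← map_mul, inv_mul_cancel₀ (by exact_mod_cast hd0), map_one, one_mul]
    rw [← hsmul]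
    exact ℚ⟮θ⟯.smul_mem hθmem
  set g := minpoly ℤ θ with hg
  have hgmono : g.Monic := minpoly.monic hθint
  have hgdeg : 1 ≤ g.natDegree := minpoly.natDegree_pos hθint
  set O₁ := Algebra.adjoin ℤ ({θ} : Set K) with hO₁
  set fK := f.map (algebraMap ℤ K) with hfK
  have hfKsplits : Splits fK := by
    have h1 : fK = qf.map (algebraMap ℚ K) := by
      show Polynomial.map (algebraMap ℤ K) f = _
      rw [Polynomial.map_map, ← IsScalarTower.algebraMap_eq]
    rw [h1]
    exact SplittingField.splits qf
  set t := fK.roots with ht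
  have hfKprod : fK = (t.map (fun α => X - C α)).prod :=
    hfKsplits.eq_prod_roots_of_monic (hmonic.map _)
  have hmem : ∀ α ∈ t, ∃ d' : ℤ, d' ≠ 0 ∧ (d' : K) * α ∈ O₁ := by
    intro α hα
    have h1 : α ∈ (⊤ : IntermediateField ℚ K) := trivial
    rw [← hprim] at h1
    have h2 : α ∈ Algebra.adjoin ℚ ({θ} : Set K) := by
      rw [← IntermediateField.adjoin_simple_toSubalgebra_of_isAlgebraic hθQ.isAlgebraic]
      exact h1
    rw [Algebra.adjoin_singleton_eq_range_aeval] at h2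
    obtain ⟨a, ha⟩ := h2
    have ha' : (aeval θ) a = α := ha
    obtain ⟨n, A', hn, hA'⟩ := exists_int_scale a
    refine ⟨n, hn, ?_⟩
    have h3 : (aeval θ) A' = (n : K) * α := by
      calc (aeval θ) A' = aeval θ (A'.map (algebraMap ℤ ℚ)) :=
            (aeval_map_algebraMap ℚ θ A').symm
        _ = aeval θ (C (n : ℚ) * a) := by rw [← algebraMap_int_eq] at hA'; rw [hA']
        _ = algebraMap ℚ K ((n : ℚ)) * α := by rw [map_mul, aeval_C, ha']
        _ = (n : K) * α := by norm_num
    rw [← h3, hO₁, Algebra.adjoin_singleton_eq_range_aeval]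
    exact ⟨A', rfl⟩
  have hmem' : ∀ α : K, ∃ d' : ℤ, d' ≠ 0 ∧ (α ∈ t → (d' : K) * α ∈ O₁) := by
    intro α
    by_cases h : α ∈ t
    · obtain ⟨d', h1, h2⟩ := hmem α h
      exact ⟨d', h1, fun _ => h2⟩
    · exact ⟨1, one_ne_zero, fun h' => absurd h' h⟩
  choose df hdf0 hdfmem using hmem'
  set D : ℤ := ∏ α ∈ t.toFinset, df α with hD
  have hD0 : D ≠ 0 := Finset.prod_ne_zero_iff.mpr (fun _ _ => hdf0 _)
  have hDmem : ∀ α ∈ t, (D : K) * α ∈ O₁ := by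
    intro α hα
    have h1 : D = df α * ∏ β ∈ t.toFinset.erase α, df β :=
      (Finset.mul_prod_erase _ _ (Multiset.mem_toFinset.mpr hα)).symm
    have h2 : (D : K) * α =
        ((∏ β ∈ t.toFinset.erase α, df β : ℤ) : K) * (((df α : ℤ) : K) * α) := by
      rw [h1, Int.cast_mul, Int.cast_prod]; ring
    rw [h2]
    exact O₁.mul_mem (O₁.intCast_mem _) (hdfmem α hα)
  have hbadfin : ∀ m : ℤ, m ≠ 0 → ({p : ℕ | (p : ℤ) ∣ m}).Finite := by
    intro m hm
    apply Set.Finite.subset (Set.finite_Iic m.natAbs)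
    intro p hp
    exact Nat.le_of_dvd (Int.natAbs_pos.mpr hm) (Int.natCast_dvd.mp hp)
  have hSinf : ({p : ℕ | p.Prime ∧ ∃ n : ℤ, (p : ℤ) ∣ g.eval n}).Infinite := by
    apply Set.infinite_of_forall_exists_gt
    intro a
    obtain ⟨p, h1, h2, h3⟩ := schur_exists g hgdeg (a + 1)
    exact ⟨p, ⟨h2, h3⟩, by omega⟩
  apply Set.Infinite.mono ?_ (hSinf.diff ((hbadfin c hc0).union (hbadfin D hD0)))
  intro p hp
  obtain ⟨⟨hpp, n, hdvd⟩, hbad⟩ := hp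
  simp only [Set.mem_union, Set.mem_setOf_eq, not_or] at hbad
  obtain ⟨hpc, hpD⟩ := hbad
  haveI : Fact p.Prime := ⟨hpp⟩
  have hcbar : ((c : ℤ) : ZMod p) ≠ 0 := fun h => hpc ((ZMod.intCast_zmod_eq_zero_iff_dvd c p).mp h)
  refine ⟨hpp, ?_, ?_⟩
  · -- squarefree via separability
    have hmap : (A.map (Int.castRingHom (ZMod p))) * (f.map (Int.castRingHom (ZMod p))) +
        (B.map (Int.castRingHom (ZMod p))) * derivative (f.map (Int.castRingHom (ZMod p))) =
        C ((c : ZMod p)) := by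
      have h1 := congrArg (Polynomial.map (Int.castRingHom (ZMod p))) hAB
      rw [Polynomial.map_add, Polynomial.map_mul, Polynomial.map_mul, map_C,
        ← derivative_map] at h1
      exact_mod_cast h1
    have hsep : (f.map (Int.castRingHom (ZMod p))).Separable := by
      refine ⟨C ((c : ZMod p))⁻¹ * (A.map (Int.castRingHom (ZMod p))),
        C ((c : ZMod p))⁻¹ * (B.map (Int.castRingHom (ZMod p))), ?_⟩
      have h2 : C ((c : ZMod p))⁻¹ * C ((c : ZMod p)) = 1 := by
        rw [← map_mul, inv_mul_cancel₀ hcbar, map_one]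
      linear_combination (norm := ring_nf) C ((c : ZMod p))⁻¹ * hmap + h2
    exact hsep.squarefree
  · -- splits
    have hroot : g.eval₂ (Int.castRingHom (ZMod p)) ((n : ZMod p)) = 0 := by
      have h1 : ((n : ZMod p)) = (Int.castRingHom (ZMod p)) n := rfl
      rw [h1, eval₂_at_apply]
      exact (ZMod.intCast_zmod_eq_zero_iff_dvd _ p).mpr hdvd
    have hψ : Nonempty (O₁ →+* ZMod p) :=
      ⟨(AdjoinRoot.lift (Int.castRingHom (ZMod p)) ((n : ZMod p)) hroot).comp
        ((minpoly.equivAdjoin hθint).symm.toAlgHom.toRingHom)⟩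
    obtain ⟨ψ⟩ := hψ
    set Dbar : ZMod p := ((D : ℤ) : ZMod p) with hDbar
    have hDbar0 : Dbar ≠ 0 := fun h => hpD ((ZMod.intCast_zmod_eq_zero_iff_dvd D p).mp h)
    set β : K → O₁ := fun α => if h : (D : K) * α ∈ O₁ then (⟨(D : K) * α, h⟩ : O₁) else 0
      with hβ
    have step1 : (f.scaleRoots D).map (algebraMap ℤ K) =
        (t.map (fun α => X - C ((D : K) * α))).prod := by
      rw [map_scaleRoots _ _ _ (by simp [Monic.leadingCoeff hmonic])]
      have h1 : algebraMap ℤ K D = (D : K) := by simp [algebraMap_int_eq]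
      rw [h1, ← hfK, hfKprod, multiset_prod_scaleRoots]
    have step2 : (f.scaleRoots D).map (algebraMap ℤ O₁) =
        (t.map (fun α => X - C (β α))).prod := by
      apply Polynomial.map_injective (algebraMap O₁ K) Subtype.coe_injective
      rw [Polynomial.map_map, ← IsScalarTower.algebraMap_eq, step1, Polynomial.map_multiset_prod,
        Multiset.map_map]
      congr 1
      apply Multiset.map_congr rfl
      intro α hα
      simp only [Function.comp_apply, Polynomial.map_sub, map_X, map_C]
      congr 1
      rw [hβ]
      simp only [dif_pos (hDmem α hα)]
      rfl
    have step3 : (f.scaleRoots D).map (Int.castRingHom (ZMod p)) =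
        (t.map (fun α => X - C (ψ (β α)))).prod := by
      have h1 : (Int.castRingHom (ZMod p)) = ψ.comp (algebraMap ℤ O₁) := by
        exact RingHom.ext_int _ _
      rw [h1, ← Polynomial.map_map, step2, Polynomial.map_multiset_prod, Multiset.map_map]
      congr 1
      apply Multiset.map_congr rfl
      intro α hα
      simp [Polynomial.map_sub]
    have step4 : (f.map (Int.castRingHom (ZMod p))).scaleRoots Dbar =
        (t.map (fun α => X - C (ψ (β α)))).prod := by
      rw [← step3, map_scaleRoots _ _ _ (by simp [Monic.leadingCoeff hmonic])]
      rfl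
    have h5 : ((t.map (fun α => X - C (Dbar⁻¹ * ψ (β α)))).prod).scaleRoots Dbar =
        (t.map (fun α => X - C (ψ (β α)))).prod := by
      have h6 := multiset_prod_scaleRoots (t.map (fun α => Dbar⁻¹ * ψ (β α))) Dbar
      rw [Multiset.map_map, Multiset.map_map] at h6
      simp only [Function.comp_def] at h6
      rw [h6]
      congr 1
      apply Multiset.map_congr rfl
      intro α hα
      simp [mul_inv_cancel_left₀ hDbar0]
    have final : f.map (Int.castRingHom (ZMod p)) =
        (t.map (fun α => X - C (Dbar⁻¹ * ψ (β α)))).prod := by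
      have h6 : ((f.map (Int.castRingHom (ZMod p))).scaleRoots Dbar).scaleRoots Dbar⁻¹ =
          f.map (Int.castRingHom (ZMod p)) := by
        rw [← scaleRoots_mul, mul_inv_cancel₀ hDbar0, scaleRoots_one]
      rw [← h6, step4, ← h5, ← scaleRoots_mul, mul_inv_cancel₀ hDbar0, scaleRoots_one]
    rw [splits_iff_exists_multiset]
    refine ⟨t.map (fun α => Dbar⁻¹ * ψ (β α)), ?_⟩
    rw [Monic.leadingCoeff (hmonic.map _), map_one, one_mul,
      Multiset.map_map]
    simp only [Function.comp_def]
    exact final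
end
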